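/- arXiv:1809.08127 — 4 statements merged into one kernel-verified Lean document; each statement's English description precedes it below -/
import Mathlib

section
/- Let A be a real symmetric positive definite n×n matrix. Then the system of strict linear inequalities A z > 0, z > 0 (component-wise) is feasible, i.e., there exists z ∈ ℝⁿ with all components positive such that all components of A z are positive. -/
set_option maxHeartbeats 1000000

theorem stmt_0 (n : ℕ) (A : Matrix (Fin n) (Fin n) ℝ)
    (hsymm : A.IsSymm) (hpd : A.PosDef) :
    ∃ z : Fin n → ℝ, (∀ i, 0 < z i) ∧ ∀ i, 0 < A.mulVec z i := by
  rcases Nat.eq_zero_or_pos n with hn | hn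
  · subst hn
    exact ⟨fun _ => 1, fun i => i.elim0, fun i => i.elim0⟩
  have hne : Nonempty (Fin n) := ⟨⟨0, hn⟩⟩
  -- quadratic form
  set Q : (Fin n → ℝ) → ℝ := fun z => dotProduct z (A.mulVec z) with hQ
  have hQpos : ∀ z : Fin n → ℝ, z ≠ 0 → 0 < Q z := by
    intro z hz
    simpa using hpd.dotProduct_mulVec_pos hz
  have hQcont : Continuous Q := by
    have : Q = fun z => ∑ i, z i * ∑ j, A i j * z j := by
      funext z
      simp [hQ, dotProduct, Matrix.mulVec]
    rw [this]
    exact continuous_finset_sum _ fun i _ =>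
      (continuous_apply i).mul (continuous_finset_sum _ fun j _ =>
        continuous_const.mul (continuous_apply j))
  -- scaling of Q
  have hQsmul : ∀ (c : ℝ) (z : Fin n → ℝ), Q (c • z) = c ^ 2 * Q z := by
    intro c z
    simp only [hQ, Matrix.mulVec_smul, smul_dotProduct, dotProduct_smul,
      smul_eq_mul]
    ring
  -- min of Q on sphere
  have hsne : (Metric.sphere (0 : Fin n → ℝ) 1).Nonempty := by
    refine ⟨fun _ => 1, ?_⟩
    simp [pi_norm_const]
  obtain ⟨u, hu, hmin⟩ := (isCompact_sphere (0 : Fin n → ℝ) 1).exists_isMinOn hsne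
    hQcont.continuousOn
  have hunorm : ‖u‖ = 1 := by simpa using hu
  have hune : u ≠ 0 := by
    intro h; rw [h] at hunorm; simp at hunorm
  set μ := Q u with hμ
  have hμpos : 0 < μ := hQpos u hune
  have hQlb : ∀ z : Fin n → ℝ, μ * ‖z‖ ^ 2 ≤ Q z := by
    intro z
    rcases eq_or_ne z 0 with rfl | hz
    · simp [hQ]
    · have hnz : (0 : ℝ) < ‖z‖ := norm_pos_iff.mpr hz
      set w : Fin n → ℝ := ‖z‖⁻¹ • z with hw
      have hwmem : w ∈ Metric.sphere (0 : Fin n → ℝ) 1 := by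
        simp [hw, norm_smul, abs_of_pos (inv_pos.mpr hnz), inv_mul_cancel₀ hnz.ne']
      have h1 : μ ≤ Q w := hmin hwmem
      have h2 : ‖z‖ ^ 2 * Q w = Q z := by
        rw [hw, hQsmul]
        field_simp
      nlinarith [sq_nonneg ‖z‖]
  -- objective function
  set f : (Fin n → ℝ) → ℝ := fun z => Q z / 2 - ∑ i, z i with hf
  have hfcont : Continuous f := (hQcont.div_const 2).sub
    (continuous_finset_sum _ fun i _ => continuous_apply i)
  have hsum_le : ∀ z : Fin n → ℝ, ∑ i, z i ≤ n * ‖z‖ := by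
    intro z
    calc ∑ i, z i ≤ ∑ _i : Fin n, ‖z‖ := Finset.sum_le_sum fun i _ =>
          (le_abs_self _).trans (norm_le_pi_norm z i)
      _ = n * ‖z‖ := by simp [Finset.sum_const, mul_comm]
  set R : ℝ := 2 * (n + 1) / μ with hR
  have hRpos : 0 < R := by positivity
  have hout : ∀ z : Fin n → ℝ, R ≤ ‖z‖ → 0 < f z := by
    intro z hz
    have h1 : μ * ‖z‖ ^ 2 ≤ Q z := hQlb z
    have h2 : ∑ i, z i ≤ n * ‖z‖ := hsum_le z
    have h3 : 2 * (n + 1) ≤ μ * ‖z‖ := by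
      rw [hR] at hz
      calc (2 * (n + 1) : ℝ) = μ * (2 * (n + 1) / μ) := by field_simp
        _ ≤ μ * ‖z‖ := by nlinarith
    have hzpos : 0 < ‖z‖ := lt_of_lt_of_le hRpos hz
    simp only [hf]
    nlinarith
  -- the constraint set
  set K : Set (Fin n → ℝ) := {z | ∀ i, 0 ≤ z i} with hK
  have hKclosed : IsClosed K := by
    have : K = ⋂ i, {z : Fin n → ℝ | 0 ≤ z i} := by
      ext z; simp [hK]
    rw [this]
    exact isClosed_iInter fun i => isClosed_le continuous_const (continuous_apply i)
  have hCcomp : IsCompact (K ∩ Metric.closedBall 0 R) :=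
    (isCompact_closedBall (0 : Fin n → ℝ) R).inter_left hKclosed
  have hCne : (K ∩ Metric.closedBall 0 R).Nonempty :=
    ⟨0, fun i => le_refl 0, Metric.mem_closedBall_self hRpos.le⟩
  obtain ⟨z₀, hz₀mem, hz₀min⟩ := hCcomp.exists_isMinOn hCne hfcont.continuousOn
  have hf0 : f 0 = 0 := by simp [hf, hQ]
  have hfz₀ : f z₀ ≤ 0 := by
    have := hz₀min hCne.choose_spec
    calc f z₀ ≤ f 0 := hz₀min ⟨fun i => le_refl 0, Metric.mem_closedBall_self hRpos.le⟩
      _ = 0 := hf0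
  have hz₀lt : ‖z₀‖ < R := by
    by_contra h
    exact absurd hfz₀ (not_le.mpr (hout z₀ (le_of_not_gt h)))
  have hz₀K : ∀ i, 0 ≤ z₀ i := hz₀mem.1
  -- quadratic expansion
  have key : ∀ (z : Fin n → ℝ) (t : ℝ) (i : Fin n),
      f (z + t • (Pi.single i 1 : Fin n → ℝ)) = f z + t * ((A.mulVec z) i - 1) + t ^ 2 * A i i / 2 := by
    intro z t i
    have hsymm' : dotProduct z (A.mulVec (Pi.single i 1)) = (A.mulVec z) i := by
      rw [Matrix.dotProduct_mulVec, ← Matrix.mulVec_transpose, hsymm.eq,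
        dotProduct_single, mul_one]
    have hee : dotProduct (Pi.single i 1 : Fin n → ℝ) (A.mulVec (Pi.single i 1)) = A i i := by
      simp [single_dotProduct, Matrix.mulVec_single]
    have hez : dotProduct (Pi.single i 1 : Fin n → ℝ) (A.mulVec z) = (A.mulVec z) i := by
      rw [single_dotProduct, one_mul]
    have hsum : ∑ j, (z + t • (Pi.single i 1 : Fin n → ℝ)) j = (∑ j, z j) + t := by
      simp [Finset.sum_add_distrib, ← Finset.mul_sum, Finset.sum_pi_single]
    simp only [hf, hQ, Matrix.mulVec_add, Matrix.mulVec_smul, dotProduct_add,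
      add_dotProduct, smul_dotProduct, dotProduct_smul, smul_eq_mul,
      hsymm', hee, hez, hsum]
    ring
  -- first order conditions
  have hAz₀ : ∀ i, 1 ≤ (A.mulVec z₀) i := by
    intro i
    by_contra h
    push_neg at h
    set c : ℝ := (A.mulVec z₀) i - 1 with hc
    have hcneg : c < 0 := by simp [hc]; linarith
    set a : ℝ := A i i with ha
    set t : ℝ := min (R - ‖z₀‖) (-c / (|a| + 1)) / 2 with ht
    have habs : 0 < |a| + 1 := by positivity
    have hcdiv : 0 < -c / (|a| + 1) := div_pos (by linarith) habs
    have htpos : 0 < t := by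
      apply div_pos _ two_pos
      exact lt_min (by linarith) hcdiv
    have ht1 : t < R - ‖z₀‖ := by
      have := min_le_left (R - ‖z₀‖) (-c / (|a| + 1))
      rw [ht]; linarith
    have ht2 : t ≤ -c / (|a| + 1) := by
      have h1 := min_le_right (R - ‖z₀‖) (-c / (|a| + 1))
      rw [ht]; linarith
    -- membership of perturbed point
    have hmem : z₀ + t • (Pi.single i 1 : Fin n → ℝ) ∈ K ∩ Metric.closedBall 0 R := by
      constructor
      · intro j
        simp only [Pi.add_apply, Pi.smul_apply, smul_eq_mul]
        rcases eq_or_ne j i with rfl | hji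
        · simp [Pi.single_eq_same]
          have := hz₀K j
          nlinarith
        · simp [Pi.single_eq_of_ne hji]
          exact hz₀K j
      · rw [Metric.mem_closedBall, dist_zero_right]
        have hnorm1 : ‖t • (Pi.single i 1 : Fin n → ℝ)‖ ≤ t := by
          rw [norm_smul, Real.norm_eq_abs, abs_of_pos htpos]
          have : ‖(Pi.single i 1 : Fin n → ℝ)‖ ≤ 1 := by
            apply pi_norm_le_iff_of_nonneg zero_le_one |>.mpr
            intro j
            rcases eq_or_ne j i with rfl | hji
            · simp
            · simp [Pi.single_eq_of_ne hji]
          nlinarith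
        calc ‖z₀ + t • (Pi.single i 1 : Fin n → ℝ)‖ ≤ ‖z₀‖ + ‖t • (Pi.single i 1 : Fin n → ℝ)‖ :=
              norm_add_le _ _
          _ ≤ ‖z₀‖ + t := by linarith
          _ ≤ R := by linarith
    have hge : f z₀ ≤ f (z₀ + t • (Pi.single i 1 : Fin n → ℝ)) := hz₀min hmem
    rw [key z₀ t i] at hge
    -- derive contradiction: t * c + t^2 * a / 2 ≥ 0 but it's negative
    have h1 : 0 ≤ t * c + t ^ 2 * a / 2 := by
      simp only [← hc] at hge
      linarith
    have hta : t * (|a| + 1) ≤ -c := (le_div_iff₀ habs).mp ht2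
    have h2 : t * c + t ^ 2 * a / 2 < 0 := by
      have haa : a ≤ |a| := le_abs_self a
      nlinarith
    linarith
  -- final perturbation
  set w : Fin n → ℝ := A.mulVec (fun _ => (1 : ℝ)) with hw
  set S : ℝ := ∑ i, |w i| with hS
  have hSnn : 0 ≤ S := Finset.sum_nonneg fun i _ => abs_nonneg _
  set ε : ℝ := 1 / (1 + S) with hε
  have hεpos : 0 < ε := by positivity
  refine ⟨z₀ + ε • (fun _ => (1 : ℝ)), ?_, ?_⟩
  · intro i
    have := hz₀K i
    simp only [Pi.add_apply, Pi.smul_apply, smul_eq_mul, mul_one]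
    linarith
  · intro i
    rw [Matrix.mulVec_add, Matrix.mulVec_smul]
    simp only [Pi.add_apply, Pi.smul_apply, smul_eq_mul, ← hw]
    have h1 : 1 ≤ (A.mulVec z₀) i := hAz₀ i
    have h2 : |w i| ≤ S := Finset.single_le_sum (fun j _ => abs_nonneg (w j))
      (Finset.mem_univ i)
    have h3 : ε * (1 + S) = 1 := by
      rw [hε]; field_simp
    have h4 : -(w i) ≤ S := (neg_le_abs _).trans h2
    nlinarith
end

section
/- Let A = Aᵀ be a nonsingular real symmetric n×n matrix with nonnegative off-diagonal entries. If every vector h ∈ ℝⁿ with A h > 0 (component-wise strict) satisfies h ≤ 0 (component-wise), then A is Hurwitz, i.e., all eigenvalues of A are negative reals. -/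
theorem stmt_3 (n : ℕ) (A : Matrix (Fin n) (Fin n) ℝ)
    (hsymm : A.IsSymm) (hdet : A.det ≠ 0)
    (hoff : ∀ i j, i ≠ j → 0 ≤ A i j)
    (hfp : ∀ h : Fin n → ℝ, (∀ i, 0 < A.mulVec h i) → ∀ i, h i ≤ 0) :
    ∀ μ : ℝ, Module.End.HasEigenvalue (Matrix.toLin' A) μ → μ < 0 := by
  intro μ hμ
  by_contra hμ0
  push_neg at hμ0
  obtain ⟨v, hv⟩ := hμ.exists_hasEigenvector
  have hAv : A.mulVec v = μ • v := by
    have := hv.apply_eq_smul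
    simpa [Matrix.toLin'_apply] using this
  set w : Fin n → ℝ := fun i => |v i| with hw
  -- key inequality: μ * w i ≤ (A w) i
  have hkey : ∀ i, μ * w i ≤ A.mulVec w i := by
    intro i
    have hmv : A.mulVec v i = μ * v i := by rw [hAv]; rfl
    have hsum : A.mulVec v i = ∑ j, A i j * v j := rfl
    have hsumw : A.mulVec w i = ∑ j, A i j * |v j| := rfl
    rcases le_or_gt 0 (v i) with hvi | hvi
    · have h1 : μ * w i = ∑ j, A i j * v j := by
        show μ * |v i| = _
        rw [abs_of_nonneg hvi, ← hsum, hmv]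
      rw [h1, hsumw]
      apply Finset.sum_le_sum
      intro j _
      by_cases hji : j = i
      · subst hji; rw [abs_of_nonneg hvi]
      · exact mul_le_mul_of_nonneg_left (le_abs_self _) (hoff i j (Ne.symm hji))
    · have h1 : μ * w i = ∑ j, -(A i j * v j) := by
        show μ * |v i| = _
        rw [abs_of_neg hvi, Finset.sum_neg_distrib, ← hsum, hmv]
        ring
      rw [h1, hsumw]
      apply Finset.sum_le_sum
      intro j _
      by_cases hji : j = i
      · subst hji
        rw [abs_of_neg hvi]
        ring_nf
        exact le_of_eq (by ring)
      · calc -(A i j * v j) = A i j * (-v j) := by ring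
          _ ≤ A i j * |v j| :=
            mul_le_mul_of_nonneg_left (neg_le_abs _) (hoff i j (Ne.symm hji))
  -- w is nonneg and has a positive entry
  have hwnn : ∀ i, 0 ≤ w i := fun i => abs_nonneg _
  obtain ⟨i₀, hi₀⟩ : ∃ i, 0 < w i := by
    by_contra hc
    push_neg at hc
    apply hv.right
    funext i
    have h0 : |v i| = 0 := le_antisymm (hc i) (hwnn i)
    exact abs_eq_zero.mp h0
  -- u solves A u = 1
  set u : Fin n → ℝ := A⁻¹.mulVec 1 with hu
  have hAu : A.mulVec u = 1 := by
    rw [hu, Matrix.mulVec_mulVec, Matrix.mul_nonsing_inv A (isUnit_iff_ne_zero.mpr hdet),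
      Matrix.one_mulVec]
  -- choose t
  set t : ℝ := w i₀ / (|u i₀| + 1) with ht
  have htpos : 0 < t := div_pos hi₀ (by positivity)
  have hti : 0 < w i₀ + t * u i₀ := by
    have h1 : t * |u i₀| < w i₀ := by
      rw [ht]
      rw [div_mul_eq_mul_div, div_lt_iff₀ (by positivity)]
      nlinarith [abs_nonneg (u i₀), hi₀]
    have h2 : -(t * |u i₀|) ≤ t * u i₀ := by
      have := neg_abs_le (u i₀)
      nlinarith
    linarith
  set h : Fin n → ℝ := fun i => w i + t * u i with hh
  have hAh : ∀ i, 0 < A.mulVec h i := by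
    intro i
    have : A.mulVec h = A.mulVec w + t • A.mulVec u := by
      rw [hh]
      have : (fun i => w i + t * u i) = w + t • u := by funext i; simp [mul_comm]
      rw [this, Matrix.mulVec_add, Matrix.mulVec_smul]
    rw [this]
    have h1 : 0 ≤ A.mulVec w i := le_trans (by positivity) (hkey i)
    have h2 : (t • A.mulVec u) i = t := by rw [hAu]; simp
    simp only [Pi.add_apply]
    rw [h2]
    linarith
  have := hfp h hAh i₀
  rw [hh] at this
  simp only at this
  linarith
end

section
/- Suppose b > 0, W > 0, and a continuously differentiable function x : [t, τ) → (0, ∞) satisfies ẋ(s) ≤ -b/(2 x(s)) whenever x(s) ≤ b/(2W), and x(t) ≤ b/(2W). Then for all θ ∈ [t, τ), x(θ)² ≤ x(t)² - b (θ - t). In particular τ - t ≤ x(t)²/b, i.e., x reaches (approaches) 0 in finite time. -/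
theorem stmt_13 (b W t τ : ℝ) (hb : 0 < b) (hW : 0 < W) (htτ : t < τ)
    (x x' : ℝ → ℝ)
    (hpos : ∀ s ∈ Set.Ico t τ, 0 < x s)
    (hderiv : ∀ s ∈ Set.Ico t τ, HasDerivAt x (x' s) s)
    (hineq : ∀ s ∈ Set.Ico t τ, x s ≤ b / (2 * W) → x' s ≤ -b / (2 * x s))
    (hinit : x t ≤ b / (2 * W)) :
    (∀ θ ∈ Set.Ico t τ, x θ ^ 2 ≤ x t ^ 2 - b * (θ - t)) ∧ τ - t ≤ x t ^ 2 / b := by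
  -- Step 1: invariance of the region x ≤ b/(2W)
  have hbound : ∀ θ ∈ Set.Ico t τ, x θ ≤ b / (2 * W) := by
    intro θ hθ
    by_contra hgt
    push_neg at hgt
    set c := b / (2 * W) with hc
    set S : Set ℝ := {s | s ∈ Set.Icc t θ ∧ c < x s} with hS
    have hθS : θ ∈ S := ⟨⟨hθ.1, le_refl θ⟩, hgt⟩
    have hne : S.Nonempty := ⟨θ, hθS⟩
    have hbdd : BddBelow S := ⟨t, fun s hs => hs.1.1⟩
    set u := sInf S with hu
    have hut : t ≤ u := le_csInf hne fun s hs => hs.1.1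
    have huθ : u ≤ θ := csInf_le hbdd hθS
    have huIco : u ∈ Set.Ico t τ := ⟨hut, lt_of_le_of_lt huθ hθ.2⟩
    have hcontu : ContinuousAt x u := (hderiv u huIco).continuousAt
    -- u ∉ S
    have huS : u ∉ S := by
      intro huS
      have hut' : t < u := by
        rcases lt_or_eq_of_le hut with h | h
        · exact h
        · exfalso; rw [← h] at huS; exact absurd hinit (not_le.mpr huS.2)
      have hev : ∀ᶠ s in nhds u, c < x s :=
        hcontu.eventually (eventually_gt_nhds huS.2)
      rcases Metric.eventually_nhds_iff.mp hev with ⟨δ, hδ, hδ'⟩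
      set s := max t (u - δ/2) with hsdef
      have hst : t ≤ s := le_max_left _ _
      have hsu : s < u := by
        apply max_lt hut'
        linarith
      have hdist : dist s u < δ := by
        rw [Real.dist_eq, abs_of_nonpos (by linarith)]
        have : u - δ/2 ≤ s := le_max_right _ _
        linarith
      have hsS : s ∈ S := ⟨⟨hst, le_of_lt (lt_of_lt_of_le hsu huθ)⟩, hδ' hdist⟩
      exact absurd (csInf_le hbdd hsS) (not_le.mpr hsu)
    have hxu : x u ≤ c := by
      by_contra h
      exact huS ⟨⟨hut, huθ⟩, not_le.mp h⟩
    -- derivative at u is negative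
    have hxu' : x' u ≤ -b / (2 * x u) := hineq u huIco hxu
    have hxupos : 0 < x u := hpos u huIco
    have hneg : x' u < 0 := lt_of_le_of_lt hxu'
      (div_neg_of_neg_of_pos (neg_neg_of_pos hb) (by linarith))
    -- slope is eventually negative to the right of u
    have hslope : Filter.Tendsto (slope x u) (nhdsWithin u {u}ᶜ) (nhds (x' u)) :=
      hasDerivAt_iff_tendsto_slope.mp (hderiv u huIco)
    have hev : ∀ᶠ s in nhdsWithin u {u}ᶜ, slope x u s < 0 :=
      hslope.eventually (eventually_lt_nhds hneg)
    rw [eventually_nhdsWithin_iff] at hev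
    rcases Metric.eventually_nhds_iff.mp hev with ⟨δ, hδ, hδ'⟩
    -- find a point of S in (u, u+δ)
    have : sInf S < u + δ := by rw [← hu]; linarith
    rcases exists_lt_of_csInf_lt hne this with ⟨s, hsS, hsδ⟩
    have hus : u ≤ s := csInf_le hbdd hsS
    have hus' : u < s := lt_of_le_of_ne hus (fun h => huS (h ▸ hsS))
    have hdist : dist s u < δ := by
      rw [Real.dist_eq, abs_of_nonneg (by linarith)]; linarith
    have hsl : slope x u s < 0 := hδ' hdist (fun h => (ne_of_gt hus') (h.symm ▸ rfl))
    rw [slope_def_field] at hsl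
    have : x s < x u := by
      have h1 : x s - x u < 0 := by
        rcases div_neg_iff.mp hsl with ⟨h, h'⟩ | ⟨h, h'⟩
        · linarith
        · linarith
      linarith
    exact absurd hsS.2 (not_lt.mpr (le_trans (le_of_lt this) hxu))
  -- Step 2: f = x² + b·s is antitone on [t, τ)
  have hf : ∀ θ ∈ Set.Ico t τ, x θ ^ 2 ≤ x t ^ 2 - b * (θ - t) := by
    have hanti : AntitoneOn (fun s => x s ^ 2 + b * s) (Set.Ico t τ) := by
      apply antitoneOn_of_deriv_nonpos (convex_Ico t τ)
      · exact fun s hs => (((hderiv s hs).pow 2).add ((hasDerivAt_id s).const_mul b)).continuousAt.continuousWithinAt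
      · intro s hs
        rw [interior_Ico] at hs
        have hs' : s ∈ Set.Ico t τ := Set.Ioo_subset_Ico_self hs
        exact (((hderiv s hs').pow 2).add ((hasDerivAt_id s).const_mul b)).differentiableAt.differentiableWithinAt
      · intro s hs
        rw [interior_Ico] at hs
        have hs' : s ∈ Set.Ico t τ := Set.Ioo_subset_Ico_self hs
        have hd : HasDerivAt (fun s => x s ^ 2 + b * s)
            (2 * x s ^ 1 * x' s + b * 1) s :=
          ((hderiv s hs').pow 2).add ((hasDerivAt_id s).const_mul b)
        rw [hd.deriv]
        have hxs : 0 < x s := hpos s hs'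
        have h1 : x' s ≤ -b / (2 * x s) := hineq s hs' (hbound s hs')
        have h2 : 2 * x s * x' s ≤ 2 * x s * (-b / (2 * x s)) :=
          mul_le_mul_of_nonneg_left h1 (by linarith)
        have h3 : 2 * x s * (-b / (2 * x s)) = -b := by
          field_simp
        simp only [pow_one]
        nlinarith
    intro θ hθ
    have := hanti (Set.left_mem_Ico.mpr htτ) hθ hθ.1
    simp only at this
    nlinarith
  refine ⟨hf, ?_⟩
  -- Step 3: finite-time bound
  by_contra h
  push_neg at h
  have hA : 0 < x t ^ 2 := pow_pos (hpos t ⟨le_refl t, htτ⟩) 2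
  have hAb : 0 < x t ^ 2 / b := div_pos hA hb
  have hθ1 : t ≤ t + x t ^ 2 / b := by linarith
  have hθ2 : t + x t ^ 2 / b < τ := by linarith
  have h1 := hf (t + x t ^ 2 / b) ⟨hθ1, hθ2⟩
  have h2 : 0 < x (t + x t ^ 2 / b) := hpos _ ⟨hθ1, hθ2⟩
  have h3 : b * (t + x t ^ 2 / b - t) = x t ^ 2 := by
    field_simp; ring
  nlinarith
end

section
/- Let A ∈ ℝ^{n×n} be symmetric positive definite with non-positive off-diagonal entries, b, w ∈ ℝⁿ, and suppose y > 0 satisfies (A y)_i > ⟨w_i⟩ + ⟨-b_i⟩/y_i + 3δ for all i and some δ > 0. Then there exists θ ∈ (0, 1) such that for any x with 0 < x ≤ y component-wise and max_i x_i/y_i = ρ ≥ θ, every index i achieving the maximum (x_i = ρ y_i) satisfies f(x)_i ≤ -δ ρ, where f(x)_i = -(Ax)_i - b_i/x_i + w_i. -/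
theorem stmt_15 (n : ℕ) (A : Matrix (Fin n) (Fin n) ℝ) (b w : Fin n → ℝ)
    (hsymm : A.IsSymm) (hpd : A.PosDef) (hoff : ∀ i j, i ≠ j → A i j ≤ 0)
    (δ : ℝ) (hδ : 0 < δ) (y : Fin n → ℝ) (hy : ∀ i, 0 < y i)
    (hchar : ∀ i, A.mulVec y i > max (w i) 0 + max (-(b i)) 0 / y i + 3 * δ) :
    ∃ θ ∈ Set.Ioo (0 : ℝ) 1,
      ∀ x : Fin n → ℝ, (∀ i, 0 < x i) → (∀ i, x i ≤ y i) →
        ∀ ρ : ℝ, θ ≤ ρ → (∀ j, x j ≤ ρ * y j) →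
          ∀ i, x i = ρ * y i →
            -(A.mulVec x i) - b i / x i + w i ≤ -δ * ρ := by
  classical
  set C : ℝ := ∑ i, (max (w i) 0 + max (-(b i)) 0 / y i) with hCdef
  have hterm_nn : ∀ i : Fin n, 0 ≤ max (w i) 0 + max (-(b i)) 0 / y i := by
    intro i
    have h1 : (0:ℝ) ≤ max (w i) 0 := le_max_right _ _
    have h2 : (0:ℝ) ≤ max (-(b i)) 0 / y i := div_nonneg (le_max_right _ _) (hy i).le
    linarith
  have hCnn : 0 ≤ C := Finset.sum_nonneg fun i _ => hterm_nn i
  have hterm_le : ∀ i : Fin n, max (w i) 0 + max (-(b i)) 0 / y i ≤ C := by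
    intro i
    exact Finset.single_le_sum (fun j _ => hterm_nn j) (Finset.mem_univ i)
  have huC : ∀ i : Fin n, max (w i) 0 ≤ C := by
    intro i
    have := hterm_le i
    have h2 : (0:ℝ) ≤ max (-(b i)) 0 / y i := div_nonneg (le_max_right _ _) (hy i).le
    linarith
  have hvC : ∀ i : Fin n, max (-(b i)) 0 / y i ≤ C := by
    intro i
    have := hterm_le i
    have h1 : (0:ℝ) ≤ max (w i) 0 := le_max_right _ _
    linarith
  set ε : ℝ := min (1/2) (δ / (8 * (C + 1))) with hεdef
  have hεpos : 0 < ε := by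
    apply lt_min (by norm_num)
    positivity
  have hεhalf : ε ≤ 1/2 := min_le_left _ _
  have hεδ : 8 * ε * (C + 1) ≤ δ := by
    have h := min_le_right (1/2 : ℝ) (δ / (8 * (C + 1)))
    have hden : (0:ℝ) < 8 * (C + 1) := by linarith
    rw [le_div_iff₀ hden] at h
    calc 8 * ε * (C + 1) = ε * (8 * (C + 1)) := by ring
      _ ≤ δ := h
  refine ⟨1 - ε, ⟨by linarith, by linarith⟩, ?_⟩
  intro x hx hxy ρ hθρ hxρ i hxi
  have hρhalf : (1:ℝ)/2 ≤ ρ := by linarith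
  have hρpos : 0 < ρ := by linarith
  have hρ1 : ρ ≤ 1 := by
    have h1 := hxy i
    rw [hxi] at h1
    nlinarith [hy i]
  have hρε : 1 - ρ ≤ ε := by linarith
  set u : ℝ := max (w i) 0 with hudef
  set v : ℝ := max (-(b i)) 0 / y i with hvdef
  have hu0 : 0 ≤ u := le_max_right _ _
  have hv0 : 0 ≤ v := div_nonneg (le_max_right _ _) (hy i).le
  -- step 1: (Ax)_i ≥ ρ (Ay)_i
  have hAx : ρ * A.mulVec y i ≤ A.mulVec x i := by
    simp only [Matrix.mulVec, dotProduct, Finset.mul_sum]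
    apply Finset.sum_le_sum
    intro j _
    rcases eq_or_ne j i with rfl | hji
    · rw [hxi]; ring_nf; exact le_refl _
    · have hA : A i j ≤ 0 := hoff i j hji.symm
      have h := mul_le_mul_of_nonpos_left (hxρ j) hA
      calc ρ * (A i j * y j) = A i j * (ρ * y j) := by ring
        _ ≤ A i j * x j := h
  -- step 2: -(b i / x i) ≤ v / ρ
  have hbx : -(b i / x i) ≤ v / ρ := by
    have hxy_pos : 0 < ρ * y i := mul_pos hρpos (hy i)
    have h1 : -(b i / x i) = (-(b i)) / (ρ * y i) := by
      rw [hxi, ← neg_div]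
    have h2 : v / ρ = max (-(b i)) 0 / (ρ * y i) := by
      rw [hvdef, div_div, mul_comm]
    rw [h1, h2]
    exact (div_le_div_iff_of_pos_right hxy_pos).mpr (le_max_left _ _)
  -- step 3: ρ (Ay)_i ≥ ρ (u + v + 3δ)
  have hAy : ρ * (u + v + 3 * δ) ≤ ρ * A.mulVec y i :=
    mul_le_mul_of_nonneg_left (hchar i).le hρpos.le
  -- step 4: v / ρ ≤ ρ (u + v + 3δ) - u - δ ρ
  have e1 : ρ - ρ ^ 2 ≤ ε := by nlinarith
  have e2 : 1 - ρ ^ 2 ≤ 2 * ε := by nlinarith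
  have e3 : ε * C ≤ δ / 8 := by nlinarith
  have hmain : v / ρ ≤ ρ * (u + v + 3 * δ) - u - δ * ρ := by
    rw [div_le_iff₀ hρpos]
    have a1 : (ρ - ρ ^ 2) * u ≤ ε * C := by
      have := mul_le_mul e1 (huC i) hu0 hεpos.le
      linarith
    have a2 : (1 - ρ ^ 2) * v ≤ 2 * (ε * C) := by
      have := mul_le_mul e2 (hvC i) hv0 (by linarith : (0:ℝ) ≤ 2 * ε)
      linarith
    have a3 : δ / 2 ≤ 2 * δ * ρ ^ 2 := by
      nlinarith [mul_nonneg hδ.le (mul_nonneg (by linarith : (0:ℝ) ≤ ρ - 1/2) (by linarith : (0:ℝ) ≤ ρ + 1/2))]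
    nlinarith
  have hw : w i ≤ u := le_max_left _ _
  linarith
end
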